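/- Comparison theorem: let {X_i}_{i≥1} be a convolutionary sequence of d-dimensional random vectors on a sublinear expectation space (Ω,H,𝔼), and let {X̂_i}_{i≥1} be an independent sequence on another sublinear expectation space (Ω̂,Ĥ,Ê) with X̂_i identically distributed as X_i for each i. Then for every m ∈ ℕ, n ∈ ℕ⁺ and every bounded Lipschitz function φ on ℝ^d, 𝔼[φ(∑_{i=m+1}^{m+n} X_i)] = Ê[φ(∑_{i=m+1}^{m+n} X̂_i)]. -/

import Mathlib

/-- Locally Lipschitz test functions of class `C_{l,Lip}`. -/
def LocLip {V : Type*} [NormedAddCommGroup V] (φ : V → ℝ) : Prop :=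
  ∃ C > (0 : ℝ), ∃ m : ℕ, ∀ x y : V, |φ x - φ y| ≤ C * (1 + ‖x‖ ^ m + ‖y‖ ^ m) * ‖x - y‖

/-- Bounded Lipschitz test functions of class `C_{b,Lip}`. -/
def BddLip {V : Type*} [NormedAddCommGroup V] (φ : V → ℝ) : Prop :=
  (∃ M : ℝ, ∀ x, |φ x| ≤ M) ∧ ∃ C : ℝ, ∀ x y : V, |φ x - φ y| ≤ C * ‖x - y‖

lemma bddLip_to_locLip {V : Type*} [NormedAddCommGroup V] {φ : V → ℝ}
    (h : BddLip φ) : LocLip φ := by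
  obtain ⟨-, C, hC⟩ := h
  refine ⟨|C| + 1, by positivity, 0, fun x y => ?_⟩
  have h1 : |φ x - φ y| ≤ |C| * ‖x - y‖ :=
    (hC x y).trans (mul_le_mul_of_nonneg_right (le_abs_self C) (norm_nonneg _))
  have h2 : (0:ℝ) ≤ ‖x - y‖ := norm_nonneg _
  have h3 : (0:ℝ) ≤ |C| := abs_nonneg C
  simp only [pow_zero]
  nlinarith

lemma E_le_add {Ω : Type*} (E : (Ω → ℝ) → ℝ)
    (hmono : ∀ f g : Ω → ℝ, f ≤ g → E f ≤ E g)
    (hconst : ∀ c : ℝ, E (fun _ => c) = c)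
    (hsubadd : ∀ f g : Ω → ℝ, E (f + g) ≤ E f + E g)
    (f g : Ω → ℝ) (c : ℝ) (h : ∀ ω, f ω ≤ g ω + c) : E f ≤ E g + c := by
  have h1 : E f ≤ E (g + fun _ => c) := hmono _ _ fun ω => h ω
  have h2 : E (g + fun _ => c) ≤ E g + E (fun _ => c) := hsubadd _ _
  rw [hconst] at h2
  linarith

lemma psi_bddLip {Ω : Type*} {d : ℕ} (E : (Ω → ℝ) → ℝ)
    (hmono : ∀ f g : Ω → ℝ, f ≤ g → E f ≤ E g)
    (hconst : ∀ c : ℝ, E (fun _ => c) = c)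
    (hsubadd : ∀ f g : Ω → ℝ, E (f + g) ≤ E f + E g)
    (Y : Ω → Fin d → ℝ) {φ : (Fin d → ℝ) → ℝ}
    (hφ : BddLip φ) : BddLip (fun x => E (fun ω => φ (x + Y ω))) := by
  obtain ⟨⟨M, hM⟩, C, hC⟩ := hφ
  constructor
  · refine ⟨M, fun x => abs_le.2 ⟨?_, ?_⟩⟩
    · have := hmono (fun _ => -M) (fun ω => φ (x + Y ω)) (fun ω => (abs_le.1 (hM _)).1)
      rwa [hconst] at this
    · have := hmono (fun ω => φ (x + Y ω)) (fun _ => M) (fun ω => (abs_le.1 (hM _)).2)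
      rwa [hconst] at this
  · refine ⟨C, fun x y => ?_⟩
    have key : ∀ a b : Fin d → ℝ,
        E (fun ω => φ (a + Y ω)) - E (fun ω => φ (b + Y ω)) ≤ C * ‖a - b‖ := by
      intro a b
      have h : ∀ ω, φ (a + Y ω) ≤ φ (b + Y ω) + C * ‖a - b‖ := by
        intro ω
        have h1 := (abs_le.1 (hC (a + Y ω) (b + Y ω))).2
        have e : (a + Y ω) - (b + Y ω) = a - b := by abel
        rw [e] at h1
        linarith
      have := E_le_add E hmono hconst hsubadd _ _ _ h
      linarith
    rw [abs_sub_le_iff]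
    refine ⟨key x y, ?_⟩
    have := key y x
    rwa [norm_sub_rev] at this

lemma sum_reindex_aux {M : Type*} [AddCommMonoid M] (f : ℕ → M) (m n : ℕ) :
    ∑ j : Fin (m+n), (if m ≤ (j:ℕ) then f ((j:ℕ)+1) else 0) =
      ∑ i ∈ Finset.Icc (m+1) (m+n), f i := by
  rw [Fin.sum_univ_eq_sum_range (fun j => if m ≤ j then f (j+1) else 0) (m+n),
    ← Finset.sum_filter]
  have h1 : (Finset.range (m+n)).filter (fun j => m ≤ j) = Finset.Ico m (m+n) := by
    ext i; simp [Finset.mem_filter, Finset.mem_range, Finset.mem_Ico]; omega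
  have h2 : Finset.Icc (m+1) (m+n) = Finset.Ico (m+1) (m+n+1) := by
    ext i; simp
  rw [h1, h2, Finset.sum_Ico_eq_sum_range, Finset.sum_Ico_eq_sum_range]
  simp only [Nat.add_sub_cancel_left, show m+n+1-(m+1) = n from by omega]
  exact Finset.sum_congr rfl fun k _ => by rw [show m + k + 1 = m + 1 + k from by ring]

lemma phi_pair_locLip {d N m : ℕ} {φ : (Fin d → ℝ) → ℝ} (hφ : BddLip φ) :
    LocLip (fun p : (Fin N → Fin d → ℝ) × (Fin d → ℝ) =>
      φ ((∑ j : Fin N, if m ≤ (j:ℕ) then p.1 j else 0) + p.2)) := by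
  obtain ⟨-, C, hC⟩ := hφ
  refine ⟨(|C| + 1) * (N + 1), by positivity, 0, fun p q => ?_⟩
  simp only [pow_zero]
  have hpq : (0:ℝ) ≤ ‖p - q‖ := norm_nonneg _
  have hterm : ∀ j : Fin N,
      ‖(if m ≤ (j:ℕ) then p.1 j else 0) - (if m ≤ (j:ℕ) then q.1 j else 0)‖ ≤ ‖p - q‖ := by
    intro j
    by_cases h : m ≤ (j:ℕ)
    · simp only [if_pos h]
      calc ‖p.1 j - q.1 j‖ = ‖(p.1 - q.1) j‖ := by rw [Pi.sub_apply]
        _ ≤ ‖p.1 - q.1‖ := norm_le_pi_norm (p.1 - q.1) j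
        _ = ‖(p - q).1‖ := rfl
        _ ≤ ‖p - q‖ := norm_fst_le _
    · simp [h]
  have hsum : ‖(∑ j : Fin N, if m ≤ (j:ℕ) then p.1 j else 0) -
      (∑ j : Fin N, if m ≤ (j:ℕ) then q.1 j else 0)‖ ≤ (N:ℝ) * ‖p - q‖ := by
    rw [← Finset.sum_sub_distrib]
    refine (norm_sum_le _ _).trans ?_
    calc (∑ j : Fin N, ‖(if m ≤ (j:ℕ) then p.1 j else 0) - (if m ≤ (j:ℕ) then q.1 j else 0)‖)
        ≤ ∑ _j : Fin N, ‖p - q‖ := Finset.sum_le_sum fun j _ => hterm j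
      _ = (N:ℝ) * ‖p - q‖ := by simp [Finset.sum_const, Finset.card_univ, nsmul_eq_mul]
  have hy : ‖p.2 - q.2‖ ≤ ‖p - q‖ := norm_snd_le (p - q)
  have h1 : |φ ((∑ j : Fin N, if m ≤ (j:ℕ) then p.1 j else 0) + p.2) -
      φ ((∑ j : Fin N, if m ≤ (j:ℕ) then q.1 j else 0) + q.2)| ≤
      |C| * (‖(∑ j : Fin N, if m ≤ (j:ℕ) then p.1 j else 0) -
        (∑ j : Fin N, if m ≤ (j:ℕ) then q.1 j else 0)‖ + ‖p.2 - q.2‖) := by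
    refine (hC _ _).trans ?_
    have e : ((∑ j : Fin N, if m ≤ (j:ℕ) then p.1 j else 0) + p.2) -
        ((∑ j : Fin N, if m ≤ (j:ℕ) then q.1 j else 0) + q.2) =
        ((∑ j : Fin N, if m ≤ (j:ℕ) then p.1 j else 0) -
          (∑ j : Fin N, if m ≤ (j:ℕ) then q.1 j else 0)) + (p.2 - q.2) := by abel
    rw [e]
    calc C * ‖_ + (p.2 - q.2)‖ ≤ |C| * ‖_ + (p.2 - q.2)‖ :=
          mul_le_mul_of_nonneg_right (le_abs_self C) (norm_nonneg _)
      _ ≤ |C| * (‖_‖ + ‖p.2 - q.2‖) :=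
          mul_le_mul_of_nonneg_left (norm_add_le _ _) (abs_nonneg C)
  have hC0 : (0:ℝ) ≤ |C| := abs_nonneg C
  have hNn : (0:ℝ) ≤ (N:ℝ) := Nat.cast_nonneg N
  have hsn : ‖(∑ j : Fin N, if m ≤ (j:ℕ) then p.1 j else 0) -
        (∑ j : Fin N, if m ≤ (j:ℕ) then q.1 j else 0)‖ + ‖p.2 - q.2‖ ≤ ((N:ℝ)+1) * ‖p - q‖ := by
    nlinarith
  calc |φ _ - φ _| ≤ |C| * (((N:ℝ)+1) * ‖p - q‖) := h1.trans (by
        exact mul_le_mul_of_nonneg_left hsn hC0)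
    _ ≤ (|C| + 1) * ((N:ℝ) + 1) * ((1 + 1 + 1) * ‖p - q‖) := by nlinarith [mul_nonneg hNn hpq, mul_nonneg hC0 hpq, mul_nonneg (mul_nonneg hC0 hNn) hpq]
    _ = (|C| + 1) * ((N:ℝ) + 1) * (1 + 1 + 1) * ‖p - q‖ := by ring

/-- Comparison theorem: the partial sums of a convolutionary sequence `{Xᵢ}` and of a
Peng-independent sequence `{X̂ᵢ}` with `X̂ᵢ ≗ Xᵢ` are identically distributed:
`𝔼[φ(∑_{i=m+1}^{m+n} Xᵢ)] = Ê[φ(∑_{i=m+1}^{m+n} X̂ᵢ)]` for every bounded Lipschitz `φ`. -/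
theorem comparison_theorem
    {Ω Ωh : Type*} {d : ℕ}
    (E : (Ω → ℝ) → ℝ) (Eh : (Ωh → ℝ) → ℝ)
    (hmono : ∀ f g : Ω → ℝ, f ≤ g → E f ≤ E g)
    (hconst : ∀ c : ℝ, E (fun _ => c) = c)
    (hsubadd : ∀ f g : Ω → ℝ, E (f + g) ≤ E f + E g)
    (hpos : ∀ l : ℝ, 0 ≤ l → ∀ f : Ω → ℝ, E (l • f) = l * E f)
    (hmonoh : ∀ f g : Ωh → ℝ, f ≤ g → Eh f ≤ Eh g)
    (hconsth : ∀ c : ℝ, Eh (fun _ => c) = c)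
    (hsubaddh : ∀ f g : Ωh → ℝ, Eh (f + g) ≤ Eh f + Eh g)
    (hposh : ∀ l : ℝ, 0 ≤ l → ∀ f : Ωh → ℝ, Eh (l • f) = l * Eh f)
    (X : ℕ → Ω → Fin d → ℝ) (Xh : ℕ → Ωh → Fin d → ℝ)
    -- `{Xᵢ}` is a convolutionary sequence: `∑_{i=k}^n Xᵢ` and `X_{n+1}` are of convolution
    (hconv : ∀ n k : ℕ, 1 ≤ k → k ≤ n → ∀ φ : (Fin d → ℝ) → ℝ, LocLip φ →
      E (fun ω => φ ((∑ i ∈ Finset.Icc k n, X i ω) + X (n + 1) ω)) =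
        E (fun ω => E (fun ω' => φ ((∑ i ∈ Finset.Icc k n, X i ω) + X (n + 1) ω'))))
    -- `{X̂ᵢ}` is an independent sequence: `X̂_{n+1}` is independent from `(X̂₁, …, X̂ₙ)`
    (hindep : ∀ n : ℕ, 1 ≤ n → ∀ φ : (Fin n → Fin d → ℝ) × (Fin d → ℝ) → ℝ, LocLip φ →
      Eh (fun ω => φ (fun j => Xh (j + 1) ω, Xh (n + 1) ω)) =
        Eh (fun ω => Eh (fun ω' => φ (fun j => Xh (j + 1) ω, Xh (n + 1) ω'))))
    -- `X̂ᵢ` identically distributed as `Xᵢ`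
    (hid : ∀ i : ℕ, 1 ≤ i → ∀ φ : (Fin d → ℝ) → ℝ, LocLip φ →
      Eh (fun ω => φ (Xh i ω)) = E (fun ω => φ (X i ω))) :
    ∀ (m n : ℕ), 1 ≤ n → ∀ φ : (Fin d → ℝ) → ℝ, BddLip φ →
      E (fun ω => φ (∑ i ∈ Finset.Icc (m + 1) (m + n), X i ω)) =
        Eh (fun ω => φ (∑ i ∈ Finset.Icc (m + 1) (m + n), Xh i ω)) := by
  intro m n
  induction n with
  | zero => intro h; exact absurd h (by norm_num)
  | succ n ih =>
    intro _ φ hφ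
    rcases Nat.eq_zero_or_pos n with hn | hn
    · subst hn
      simp only [Nat.add_zero, Finset.Icc_self, Finset.sum_singleton]
      exact (hid (m+1) (by omega) φ (bddLip_to_locLip hφ)).symm
    · set N := m + n + 1 with hN
      set ψ : (Fin d → ℝ) → ℝ := fun x => E (fun ω' => φ (x + X N ω')) with hψdef
      have hψ : BddLip ψ := psi_bddLip E hmono hconst hsubadd (X N) hφ
      set Φ : (Fin (m+n) → Fin d → ℝ) × (Fin d → ℝ) → ℝ :=
        fun p => φ ((∑ j : Fin (m+n), if m ≤ (j:ℕ) then p.1 j else 0) + p.2) with hΦdef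
      have hΦ : LocLip Φ := phi_pair_locLip hφ
      have hsplit : ∀ {α : Type} [inst : AddCommMonoid α] (Y : ℕ → α),
          ∑ i ∈ Finset.Icc (m+1) (m+(n+1)), Y i =
            (∑ i ∈ Finset.Icc (m+1) (m+n), Y i) + Y N := by
        intro α _ Y
        rw [show m + (n+1) = (m+n) + 1 from rfl]
        exact Finset.sum_Icc_succ_top (by omega) Y
      calc E (fun ω => φ (∑ i ∈ Finset.Icc (m + 1) (m + (n+1)), X i ω))
          = E (fun ω => φ ((∑ i ∈ Finset.Icc (m+1) (m+n), X i ω) + X N ω)) := by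
            congr 1; funext ω; rw [hsplit]
        _ = E (fun ω => E (fun ω' => φ ((∑ i ∈ Finset.Icc (m+1) (m+n), X i ω) + X N ω'))) :=
            hconv (m+n) (m+1) (by omega) (by omega) φ (bddLip_to_locLip hφ)
        _ = E (fun ω => ψ (∑ i ∈ Finset.Icc (m+1) (m+n), X i ω)) := rfl
        _ = Eh (fun ω => ψ (∑ i ∈ Finset.Icc (m+1) (m+n), Xh i ω)) := ih hn ψ hψ
        _ = Eh (fun ω => Eh (fun ω' => φ ((∑ i ∈ Finset.Icc (m+1) (m+n), Xh i ω) + Xh N ω'))) := by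
            congr 1; funext ω
            exact (hid N (by omega) (fun z => φ ((∑ i ∈ Finset.Icc (m+1) (m+n), Xh i ω) + z))
              (bddLip_to_locLip ⟨⟨hφ.1.choose, fun x => hφ.1.choose_spec _⟩, hφ.2.choose, fun x y => by
                have := hφ.2.choose_spec ((∑ i ∈ Finset.Icc (m+1) (m+n), Xh i ω) + x)
                  ((∑ i ∈ Finset.Icc (m+1) (m+n), Xh i ω) + y)
                rwa [show ((∑ i ∈ Finset.Icc (m+1) (m+n), Xh i ω) + x) -
                  ((∑ i ∈ Finset.Icc (m+1) (m+n), Xh i ω) + y) = x - y from by abel] at this⟩)).symm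
        _ = Eh (fun ω => Eh (fun ω' => Φ (fun j => Xh ((j:ℕ) + 1) ω, Xh N ω'))) := by
            congr 1; funext ω; congr 1; funext ω'
            simp only [hΦdef]
            rw [sum_reindex_aux (fun i => Xh i ω) m n]
        _ = Eh (fun ω => Φ (fun j => Xh ((j:ℕ) + 1) ω, Xh N ω)) :=
            (hindep (m+n) (by omega) Φ hΦ).symm
        _ = Eh (fun ω => φ (∑ i ∈ Finset.Icc (m + 1) (m + (n+1)), Xh i ω)) := by
            congr 1; funext ω
            simp only [hΦdef]
            rw [sum_reindex_aux (fun i => Xh i ω) m n, ← hsplit]
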